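/- (Optimality of the decoupled graphon LQR control.) Let α₀ ∈ ℝ, T > 0, and let poly_B, poly_Q, poly_{P₀} be real polynomials with constant terms β₀, q₀, z₀ respectively, such that q₀ ≥ 0, z₀ ≥ 0, and poly_Q(λ_ℓ) ≥ 0, poly_{P₀}(λ_ℓ) ≥ 0 for all 1 ≤ ℓ ≤ d. Let L : [0,T] → ℝ solve L̇_t = 2α₀ L_t − β₀² L_t² + q₀, L_0 = z₀, and for each ℓ let M^ℓ : [0,T] → ℝ solve Ṁ^ℓ_t = 2(α₀+λ_ℓ) M^ℓ_t − poly_B(λ_ℓ)² (M^ℓ_t)² + poly_Q(λ_ℓ), M^ℓ_0 = poly_{P₀}(λ_ℓ). Then: (i) for every differentiable x : [0,T] → H and continuous u : [0,T] → H with ẋ_t = α₀ x_t + A x_t + poly_B(A) u_t and x_0 = x₀, the cost J(u) = ∫₀^T (⟨x_t, poly_Q(A) x_t⟩ + ⟨u_t, u_t⟩) dt + ⟨x_T, poly_{P₀}(A) x_T⟩ satisfies J(u) ≥ L_T ‖x̆₀‖² + Σ_{ℓ=1}^d M^ℓ_T ⟨x₀, f_ℓ⟩²; and (ii) if moreover u_t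 = −β₀ L_{T−t} x̆_t − Σ_{ℓ=1}^d poly_B(λ_ℓ) M^ℓ_{T−t} ⟨x_t, f_ℓ⟩ f_ℓ for all t, then J(u) = L_T ‖x̆₀‖² + Σ_{ℓ=1}^d M^ℓ_T ⟨x₀, f_ℓ⟩²; hence this feedback law is optimal. -/

import Mathlib

open RealInnerProductSpace Polynomial Finset

section Aux
variable {H : Type*} [NormedAddCommGroup H] [InnerProductSpace ℝ H]
  {d : ℕ} {f : Fin d → H} {lam : Fin d → ℝ} {A : H →L[ℝ] H}

lemma aux_sum_inner (hf : Orthonormal ℝ f) (c : Fin d → ℝ) (j : Fin d) :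
    ⟪∑ ℓ : Fin d, c ℓ • f ℓ, f j⟫ = c j := by
  rw [sum_inner]
  simp [real_inner_smul_left, orthonormal_iff_ite.mp hf]

lemma aux_vb_inner (hf : Orthonormal ℝ f) (v : H) (j : Fin d) :
    ⟪v - ∑ ℓ : Fin d, ⟪v, f ℓ⟫ • f ℓ, f j⟫ = 0 := by
  rw [inner_sub_left, aux_sum_inner hf, sub_self]

lemma aux_A_pow (hf : Orthonormal ℝ f)
    (hA : ∀ v : H, A v = ∑ ℓ : Fin d, (lam ℓ * ⟪v, f ℓ⟫) • f ℓ) (n : ℕ) :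
    ∀ v : H, (A ^ (n + 1)) v = ∑ ℓ : Fin d, (lam ℓ ^ (n + 1) * ⟪v, f ℓ⟫) • f ℓ := by
  induction n with
  | zero => intro v; simpa using hA v
  | succ n ih =>
    intro v
    rw [pow_succ', ContinuousLinearMap.mul_apply, hA ((A ^ (n+1)) v)]
    refine Finset.sum_congr rfl fun ℓ _ => ?_
    rw [ih v, aux_sum_inner hf (fun m => lam m ^ (n+1) * ⟪v, f m⟫) ℓ]
    ring_nf

lemma aux_key (hf : Orthonormal ℝ f)
    (hA : ∀ v : H, A v = ∑ ℓ : Fin d, (lam ℓ * ⟪v, f ℓ⟫) • f ℓ) (p : Polynomial ℝ) (v : H) :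
    (Polynomial.aeval A p) v
      = p.coeff 0 • (v - ∑ ℓ : Fin d, ⟪v, f ℓ⟫ • f ℓ)
        + ∑ ℓ : Fin d, (p.eval (lam ℓ) * ⟪v, f ℓ⟫) • f ℓ := by
  induction p using Polynomial.induction_on' with
  | add p q hp hq =>
    rw [map_add, ContinuousLinearMap.add_apply, hp, hq, Polynomial.coeff_add]
    simp only [Polynomial.eval_add, add_mul, add_smul, Finset.sum_add_distrib]
    abel
  | monomial n a =>
    have hap : (Polynomial.aeval A (Polynomial.monomial n a)) v = a • ((A ^ n) v) := by
      rw [Polynomial.aeval_monomial, ContinuousLinearMap.mul_apply]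
      simp [Algebra.algebraMap_eq_smul_one]
    cases n with
    | zero =>
      have h1 : (∑ ℓ : Fin d, (Polynomial.eval (lam ℓ) (Polynomial.monomial 0 a) * ⟪v, f ℓ⟫) • f ℓ)
          = a • ∑ ℓ : Fin d, ⟪v, f ℓ⟫ • f ℓ := by
        rw [Finset.smul_sum]
        refine Finset.sum_congr rfl fun ℓ _ => ?_
        rw [Polynomial.eval_monomial, pow_zero, mul_one, smul_smul]
      rw [hap, h1, Polynomial.coeff_monomial, if_pos rfl, pow_zero,
        ContinuousLinearMap.one_apply, smul_sub]
      abel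
    | succ n =>
      rw [hap, aux_A_pow hf hA n v]
      rw [Polynomial.coeff_monomial, if_neg (Nat.succ_ne_zero n), zero_smul, zero_add,
        Finset.smul_sum]
      refine Finset.sum_congr rfl fun ℓ _ => ?_
      rw [smul_smul, Polynomial.eval_monomial]
      ring_nf

lemma aux_inner_f (hf : Orthonormal ℝ f)
    (hA : ∀ v : H, A v = ∑ ℓ : Fin d, (lam ℓ * ⟪v, f ℓ⟫) • f ℓ) (p : Polynomial ℝ) (v : H)
    (j : Fin d) :
    ⟪(Polynomial.aeval A p) v, f j⟫ = p.eval (lam j) * ⟪v, f j⟫ := by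
  rw [aux_key hf hA, inner_add_left, real_inner_smul_left, aux_vb_inner hf,
    aux_sum_inner hf (fun ℓ => p.eval (lam ℓ) * ⟪v, f ℓ⟫) j, mul_zero, zero_add]

lemma aux_inner_self (hf : Orthonormal ℝ f)
    (hA : ∀ v : H, A v = ∑ ℓ : Fin d, (lam ℓ * ⟪v, f ℓ⟫) • f ℓ) (p : Polynomial ℝ) (v : H) :
    ⟪v, (Polynomial.aeval A p) v⟫
      = p.coeff 0 * ⟪v - ∑ ℓ : Fin d, ⟪v, f ℓ⟫ • f ℓ, v - ∑ ℓ : Fin d, ⟪v, f ℓ⟫ • f ℓ⟫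
        + ∑ ℓ : Fin d, p.eval (lam ℓ) * ⟪v, f ℓ⟫ ^ 2 := by
  have h0 : ⟪∑ ℓ : Fin d, ⟪v, f ℓ⟫ • f ℓ, v - ∑ ℓ : Fin d, ⟪v, f ℓ⟫ • f ℓ⟫ = 0 := by
    rw [sum_inner]
    refine Finset.sum_eq_zero fun j _ => ?_
    have hz : ⟪f j, v - ∑ ℓ : Fin d, ⟪v, f ℓ⟫ • f ℓ⟫ = (0:ℝ) := by
      rw [real_inner_comm]; exact aux_vb_inner hf v j
    rw [real_inner_smul_left, hz, mul_zero]
  have hv : ⟪v, v - ∑ ℓ : Fin d, ⟪v, f ℓ⟫ • f ℓ⟫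
      = ⟪v - ∑ ℓ : Fin d, ⟪v, f ℓ⟫ • f ℓ, v - ∑ ℓ : Fin d, ⟪v, f ℓ⟫ • f ℓ⟫ := by
    have h1 : ⟪v, v - ∑ ℓ : Fin d, ⟪v, f ℓ⟫ • f ℓ⟫
        - ⟪v - ∑ ℓ : Fin d, ⟪v, f ℓ⟫ • f ℓ, v - ∑ ℓ : Fin d, ⟪v, f ℓ⟫ • f ℓ⟫ = 0 := by
      rw [← inner_sub_left, sub_sub_cancel]
      exact h0
    linarith
  rw [aux_key hf hA, inner_add_right, real_inner_smul_right, hv, inner_sum]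
  congr 1
  refine Finset.sum_congr rfl fun ℓ _ => ?_
  rw [real_inner_smul_right]
  ring


lemma graphon_lqr_key (hf : Orthonormal ℝ f)
    (hA : ∀ v : H, A v = ∑ ℓ : Fin d, (lam ℓ * ⟪v, f ℓ⟫) • f ℓ)
    (α₀ T : ℝ) (hT : 0 < T)
    (polyB polyQ polyP₀ : Polynomial ℝ) (β₀ q₀ z₀ : ℝ)
    (hβ₀ : β₀ = polyB.coeff 0) (hq₀ : q₀ = polyQ.coeff 0) (hz₀ : z₀ = polyP₀.coeff 0)
    (L : ℝ → ℝ)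
    (hL : ∀ t ∈ Set.Icc (0:ℝ) T,
      HasDerivAt L (2 * α₀ * L t - β₀ ^ 2 * (L t) ^ 2 + q₀) t)
    (hL0 : L 0 = z₀)
    (M : Fin d → ℝ → ℝ)
    (hM : ∀ ℓ : Fin d, ∀ t ∈ Set.Icc (0:ℝ) T,
      HasDerivAt (M ℓ)
        (2 * (α₀ + lam ℓ) * M ℓ t
          - (Polynomial.eval (lam ℓ) polyB) ^ 2 * (M ℓ t) ^ 2
          + Polynomial.eval (lam ℓ) polyQ) t)
    (hM0 : ∀ ℓ : Fin d, M ℓ 0 = Polynomial.eval (lam ℓ) polyP₀)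
    (x₀ : H) (x u : ℝ → H)
    (hx : ∀ t ∈ Set.Icc (0:ℝ) T,
      HasDerivAt x (α₀ • x t + A (x t) + (Polynomial.aeval A polyB) (u t)) t)
    (hx0 : x 0 = x₀) (hu : ContinuousOn u (Set.Icc 0 T)) :
    (∫ t in (0:ℝ)..T, (⟪x t, (Polynomial.aeval A polyQ) (x t)⟫ + ⟪u t, u t⟫))
      + ⟪x T, (Polynomial.aeval A polyP₀) (x T)⟫
    = L T * ‖x₀ - ∑ ℓ : Fin d, ⟪x₀, f ℓ⟫ • f ℓ‖ ^ 2
      + ∑ ℓ : Fin d, M ℓ T * ⟪x₀, f ℓ⟫ ^ 2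
      + ∫ t in (0:ℝ)..T,
          (⟪(u t - ∑ ℓ : Fin d, ⟪u t, f ℓ⟫ • f ℓ)
              + (β₀ * L (T - t)) • (x t - ∑ ℓ : Fin d, ⟪x t, f ℓ⟫ • f ℓ),
            (u t - ∑ ℓ : Fin d, ⟪u t, f ℓ⟫ • f ℓ)
              + (β₀ * L (T - t)) • (x t - ∑ ℓ : Fin d, ⟪x t, f ℓ⟫ • f ℓ)⟫
           + ∑ ℓ : Fin d,
              (⟪u t, f ℓ⟫ + Polynomial.eval (lam ℓ) polyB * M ℓ (T - t) * ⟪x t, f ℓ⟫) ^ 2) := by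
  classical
  set xb : ℝ → H := fun t => x t - ∑ ℓ : Fin d, ⟪x t, f ℓ⟫ • f ℓ with hxbdef
  set ub : ℝ → H := fun t => u t - ∑ ℓ : Fin d, ⟪u t, f ℓ⟫ • f ℓ with hubdef
  set V : ℝ → ℝ := fun t => L (T - t) * ⟪xb t, xb t⟫
      + ∑ ℓ : Fin d, M ℓ (T - t) * ⟪x t, f ℓ⟫ ^ 2 with hVdef
  set cost : ℝ → ℝ := fun t => ⟪x t, (Polynomial.aeval A polyQ) (x t)⟫ + ⟪u t, u t⟫
    with hcostdef
  set R : ℝ → ℝ := fun t =>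
      ⟪ub t + (β₀ * L (T - t)) • xb t, ub t + (β₀ * L (T - t)) • xb t⟫
      + ∑ ℓ : Fin d,
          (⟪u t, f ℓ⟫ + Polynomial.eval (lam ℓ) polyB * M ℓ (T - t) * ⟪x t, f ℓ⟫) ^ 2
    with hRdef
  set Vd : ℝ → ℝ := fun t =>
      (-(2 * α₀ * L (T - t) - β₀ ^ 2 * (L (T - t)) ^ 2 + q₀)) * ⟪xb t, xb t⟫
        + L (T - t) * (2 * (α₀ * ⟪xb t, xb t⟫ + β₀ * ⟪ub t, xb t⟫))
        + ∑ ℓ : Fin d,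
            ((-(2 * (α₀ + lam ℓ) * M ℓ (T - t)
                - (Polynomial.eval (lam ℓ) polyB) ^ 2 * (M ℓ (T - t)) ^ 2
                + Polynomial.eval (lam ℓ) polyQ)) * ⟪x t, f ℓ⟫ ^ 2
             + M ℓ (T - t) * (2 * (((α₀ + lam ℓ) * ⟪x t, f ℓ⟫
                  + Polynomial.eval (lam ℓ) polyB * ⟪u t, f ℓ⟫) * ⟪x t, f ℓ⟫))) with hVddef
  -- derivative of the eigencomponents
  have hy : ∀ ℓ : Fin d, ∀ t ∈ Set.Icc (0:ℝ) T,
      HasDerivAt (fun s => ⟪x s, f ℓ⟫)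
        ((α₀ + lam ℓ) * ⟪x t, f ℓ⟫ + Polynomial.eval (lam ℓ) polyB * ⟪u t, f ℓ⟫) t := by
    intro ℓ t ht
    have h := HasDerivAt.inner ℝ (hx t ht) (hasDerivAt_const t (f ℓ))
    have h2 : ⟪x t, (0:H)⟫ + ⟪α₀ • x t + A (x t) + (Polynomial.aeval A polyB) (u t), f ℓ⟫
        = (α₀ + lam ℓ) * ⟪x t, f ℓ⟫ + Polynomial.eval (lam ℓ) polyB * ⟪u t, f ℓ⟫ := by
      rw [inner_zero_right, zero_add, inner_add_left, inner_add_left, real_inner_smul_left,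
        aux_inner_f hf hA, hA (x t), aux_sum_inner hf (fun m => lam m * ⟪x t, f m⟫) ℓ]
      ring
    rw [h2] at h
    exact h
  -- derivative of the auxiliary component
  have hxb : ∀ t ∈ Set.Icc (0:ℝ) T,
      HasDerivAt xb (α₀ • xb t + β₀ • ub t) t := by
    intro t ht
    have h := (hx t ht).sub (HasDerivAt.fun_sum (fun ℓ (_ : ℓ ∈ Finset.univ) =>
      (hy ℓ t ht).smul_const (f ℓ)))
    have hveq : α₀ • xb t + β₀ • ub t
        = (α₀ • x t + A (x t) + (Polynomial.aeval A polyB) (u t))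
          - ∑ ℓ : Fin d, ((α₀ + lam ℓ) * ⟪x t, f ℓ⟫
              + Polynomial.eval (lam ℓ) polyB * ⟪u t, f ℓ⟫) • f ℓ := by
      have e1 : (Polynomial.aeval A polyB) (u t)
          = β₀ • ub t + ∑ ℓ : Fin d, (Polynomial.eval (lam ℓ) polyB * ⟪u t, f ℓ⟫) • f ℓ := by
        rw [aux_key hf hA polyB (u t), ← hβ₀, hubdef]
      have e2 : ∑ ℓ : Fin d, ((α₀ + lam ℓ) * ⟪x t, f ℓ⟫
              + Polynomial.eval (lam ℓ) polyB * ⟪u t, f ℓ⟫) • f ℓ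
          = ((∑ ℓ : Fin d, (α₀ * ⟪x t, f ℓ⟫) • f ℓ)
              + ∑ ℓ : Fin d, (lam ℓ * ⟪x t, f ℓ⟫) • f ℓ)
            + ∑ ℓ : Fin d, (Polynomial.eval (lam ℓ) polyB * ⟪u t, f ℓ⟫) • f ℓ := by
        rw [← Finset.sum_add_distrib, ← Finset.sum_add_distrib]
        refine Finset.sum_congr rfl fun ℓ _ => ?_
        rw [← add_smul, ← add_smul]
        congr 1
        ring
      have e3 : α₀ • xb t = α₀ • x t - ∑ ℓ : Fin d, (α₀ * ⟪x t, f ℓ⟫) • f ℓ := by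
        rw [hxbdef]
        simp only [smul_sub, Finset.smul_sum, smul_smul]
      rw [e1, e2, e3, hA (x t)]
      abel
    rw [hveq]
    exact h
  -- derivative of ⟪xb, xb⟫
  have hN : ∀ t ∈ Set.Icc (0:ℝ) T,
      HasDerivAt (fun s => ⟪xb s, xb s⟫)
        (2 * (α₀ * ⟪xb t, xb t⟫ + β₀ * ⟪ub t, xb t⟫)) t := by
    intro t ht
    have h := HasDerivAt.inner ℝ (hxb t ht) (hxb t ht)
    have h2 : ⟪xb t, α₀ • xb t + β₀ • ub t⟫ + ⟪α₀ • xb t + β₀ • ub t, xb t⟫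
        = 2 * (α₀ * ⟪xb t, xb t⟫ + β₀ * ⟪ub t, xb t⟫) := by
      rw [inner_add_right, inner_add_left, real_inner_smul_right, real_inner_smul_right,
        real_inner_smul_left, real_inner_smul_left, real_inner_comm (xb t) (ub t)]
      ring
    rw [h2] at h
    exact h
  -- derivative of the rescaled Riccati solutions
  have hLt : ∀ t ∈ Set.Icc (0:ℝ) T,
      HasDerivAt (fun s => L (T - s))
        (-(2 * α₀ * L (T - t) - β₀ ^ 2 * (L (T - t)) ^ 2 + q₀)) t := by
    intro t ht
    have hmem : T - t ∈ Set.Icc (0:ℝ) T := ⟨by linarith [ht.2], by linarith [ht.1]⟩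
    have h := (hL (T - t) hmem).comp t ((hasDerivAt_id t).const_sub T)
    simpa [mul_comm, Function.comp_def] using h
  have hMt : ∀ (ℓ : Fin d), ∀ t ∈ Set.Icc (0:ℝ) T,
      HasDerivAt (fun s => M ℓ (T - s))
        (-(2 * (α₀ + lam ℓ) * M ℓ (T - t)
            - (Polynomial.eval (lam ℓ) polyB) ^ 2 * (M ℓ (T - t)) ^ 2
            + Polynomial.eval (lam ℓ) polyQ)) t := by
    intro ℓ t ht
    have hmem : T - t ∈ Set.Icc (0:ℝ) T := ⟨by linarith [ht.2], by linarith [ht.1]⟩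
    have h := (hM ℓ (T - t) hmem).comp t ((hasDerivAt_id t).const_sub T)
    simpa [mul_comm, Function.comp_def] using h
  -- derivative of y^2
  have hy2 : ∀ (ℓ : Fin d), ∀ t ∈ Set.Icc (0:ℝ) T,
      HasDerivAt (fun s => ⟪x s, f ℓ⟫ ^ 2)
        (2 * (((α₀ + lam ℓ) * ⟪x t, f ℓ⟫
            + Polynomial.eval (lam ℓ) polyB * ⟪u t, f ℓ⟫) * ⟪x t, f ℓ⟫)) t := by
    intro ℓ t ht
    have h := (hy ℓ t ht).pow 2
    have h2 : (2 : ℕ) * ⟪x t, f ℓ⟫ ^ (2 - 1)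
        * ((α₀ + lam ℓ) * ⟪x t, f ℓ⟫ + Polynomial.eval (lam ℓ) polyB * ⟪u t, f ℓ⟫)
        = 2 * (((α₀ + lam ℓ) * ⟪x t, f ℓ⟫
            + Polynomial.eval (lam ℓ) polyB * ⟪u t, f ℓ⟫) * ⟪x t, f ℓ⟫) := by
      push_cast
      ring
    rw [h2] at h
    exact h
  -- derivative of V
  have hVt : ∀ t ∈ Set.Icc (0:ℝ) T, HasDerivAt V (Vd t) t := by
    intro t ht
    exact ((hLt t ht).mul (hN t ht)).add
      (HasDerivAt.fun_sum fun ℓ (_ : ℓ ∈ Finset.univ) => ((hMt ℓ t ht).mul (hy2 ℓ t ht)))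
  -- pointwise identity Vd = -cost + R
  have hcostEq : ∀ t : ℝ, cost t
      = (q₀ * ⟪xb t, xb t⟫ + ⟪ub t, ub t⟫)
        + ∑ ℓ : Fin d, (Polynomial.eval (lam ℓ) polyQ * ⟪x t, f ℓ⟫ ^ 2 + ⟪u t, f ℓ⟫ ^ 2) := by
    intro t
    have hu2 := aux_inner_self hf hA 1 (u t)
    simp only [map_one, ContinuousLinearMap.one_apply, Polynomial.coeff_one,
      Polynomial.eval_one, if_pos rfl, if_true, one_mul] at hu2
    simp only [hcostdef, hxbdef, hubdef]
    rw [aux_inner_self hf hA polyQ (x t), hu2, ← hq₀, Finset.sum_add_distrib]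
    ring
  have hREq : ∀ t : ℝ, R t
      = (⟪ub t, ub t⟫ + 2 * (β₀ * L (T - t)) * ⟪ub t, xb t⟫
          + (β₀ * L (T - t)) ^ 2 * ⟪xb t, xb t⟫)
        + ∑ ℓ : Fin d,
            (⟪u t, f ℓ⟫ + Polynomial.eval (lam ℓ) polyB * M ℓ (T - t) * ⟪x t, f ℓ⟫) ^ 2 := by
    intro t
    simp only [hRdef]
    congr 1
    rw [real_inner_add_add_self, real_inner_smul_right, real_inner_smul_left,
      real_inner_smul_right]
    ring
  have hVR : ∀ t : ℝ, Vd t = -cost t + R t := by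
    intro t
    rw [hcostEq t, hREq t]
    simp only [hVddef]
    have hsum2 : (∑ ℓ : Fin d,
        ((-(2 * (α₀ + lam ℓ) * M ℓ (T - t)
            - (Polynomial.eval (lam ℓ) polyB) ^ 2 * (M ℓ (T - t)) ^ 2
            + Polynomial.eval (lam ℓ) polyQ)) * ⟪x t, f ℓ⟫ ^ 2
         + M ℓ (T - t) * (2 * (((α₀ + lam ℓ) * ⟪x t, f ℓ⟫
              + Polynomial.eval (lam ℓ) polyB * ⟪u t, f ℓ⟫) * ⟪x t, f ℓ⟫))))
      = -(∑ ℓ : Fin d,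
            (Polynomial.eval (lam ℓ) polyQ * ⟪x t, f ℓ⟫ ^ 2 + ⟪u t, f ℓ⟫ ^ 2))
        + ∑ ℓ : Fin d,
            (⟪u t, f ℓ⟫
              + Polynomial.eval (lam ℓ) polyB * M ℓ (T - t) * ⟪x t, f ℓ⟫) ^ 2 := by
      rw [← Finset.sum_neg_distrib, ← Finset.sum_add_distrib]
      exact Finset.sum_congr rfl fun ℓ _ => by ring
    rw [hsum2]
    ring
  -- continuity
  have hxc : ContinuousOn x (Set.Icc 0 T) :=
    fun t ht => (hx t ht).continuousAt.continuousWithinAt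
  have hIx : ∀ ℓ : Fin d, ContinuousOn (fun t => ⟪x t, f ℓ⟫) (Set.Icc 0 T) :=
    fun ℓ => hxc.inner continuousOn_const
  have hIu : ∀ ℓ : Fin d, ContinuousOn (fun t => ⟪u t, f ℓ⟫) (Set.Icc 0 T) :=
    fun ℓ => hu.inner continuousOn_const
  have hxbc : ContinuousOn xb (Set.Icc 0 T) := by
    rw [hxbdef]
    exact hxc.sub (continuousOn_finset_sum _ fun ℓ _ => (hIx ℓ).smul continuousOn_const)
  have hubc : ContinuousOn ub (Set.Icc 0 T) := by
    rw [hubdef]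
    exact hu.sub (continuousOn_finset_sum _ fun ℓ _ => (hIu ℓ).smul continuousOn_const)
  have hLc : ContinuousOn (fun t => L (T - t)) (Set.Icc 0 T) :=
    fun t ht => (hLt t ht).continuousAt.continuousWithinAt
  have hMc : ∀ ℓ : Fin d, ContinuousOn (fun t => M ℓ (T - t)) (Set.Icc 0 T) :=
    fun ℓ t ht => (hMt ℓ t ht).continuousAt.continuousWithinAt
  have hcostc : ContinuousOn cost (Set.Icc 0 T) := by
    rw [hcostdef]
    exact (hxc.inner (((Polynomial.aeval A polyQ).continuous).comp_continuousOn hxc)).add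
      (hu.inner hu)
  have hRc : ContinuousOn R (Set.Icc 0 T) := by
    rw [hRdef]
    refine ContinuousOn.add ?_ ?_
    · have h1 : ContinuousOn (fun t => ub t + (β₀ * L (T - t)) • xb t) (Set.Icc 0 T) :=
        hubc.add ((continuousOn_const.mul hLc).smul hxbc)
      exact h1.inner h1
    · exact continuousOn_finset_sum _ fun ℓ _ =>
        ((hIu ℓ).add ((continuousOn_const.mul (hMc ℓ)).mul (hIx ℓ))).pow 2
  have hVdc : ContinuousOn Vd (Set.Icc 0 T) :=
    (hcostc.neg.add hRc).congr fun t _ => hVR t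
  have hVdi : IntervalIntegrable Vd MeasureTheory.volume 0 T := by
    apply ContinuousOn.intervalIntegrable
    rwa [Set.uIcc_of_le hT.le]
  have hRi : IntervalIntegrable R MeasureTheory.volume 0 T := by
    apply ContinuousOn.intervalIntegrable
    rwa [Set.uIcc_of_le hT.le]
  -- fundamental theorem of calculus
  have hFTC : ∫ t in (0:ℝ)..T, Vd t = V T - V 0 :=
    intervalIntegral.integral_eq_sub_of_hasDerivAt
      (fun t ht' => hVt t (by rwa [Set.uIcc_of_le hT.le] at ht')) hVdi
  have hintcost : ∫ t in (0:ℝ)..T, cost t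
      = (∫ t in (0:ℝ)..T, R t) - ∫ t in (0:ℝ)..T, Vd t := by
    rw [← intervalIntegral.integral_sub hRi hVdi]
    apply intervalIntegral.integral_congr
    intro t _
    have := hVR t
    simp only []
    linarith
  -- endpoint values
  have hVT : V T = ⟪x T, (Polynomial.aeval A polyP₀) (x T)⟫ := by
    simp only [hVdef, hxbdef, sub_self]
    rw [hL0, aux_inner_self hf hA polyP₀ (x T), ← hz₀]
    congr 1
    exact Finset.sum_congr rfl fun ℓ _ => by rw [hM0 ℓ]
  have hV0 : V 0 = L T * ‖x₀ - ∑ ℓ : Fin d, ⟪x₀, f ℓ⟫ • f ℓ‖ ^ 2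
      + ∑ ℓ : Fin d, M ℓ T * ⟪x₀, f ℓ⟫ ^ 2 := by
    simp only [hVdef, hxbdef, sub_zero, hx0]
    rw [real_inner_self_eq_norm_sq]
  have final : (∫ t in (0:ℝ)..T, cost t) + ⟪x T, (Polynomial.aeval A polyP₀) (x T)⟫
      = L T * ‖x₀ - ∑ ℓ : Fin d, ⟪x₀, f ℓ⟫ • f ℓ‖ ^ 2
        + ∑ ℓ : Fin d, M ℓ T * ⟪x₀, f ℓ⟫ ^ 2 + ∫ t in (0:ℝ)..T, R t := by
    rw [hintcost, hFTC, ← hVT, ← hV0]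
    ring
  simpa only [hcostdef, hRdef, hxbdef, hubdef] using final


end Aux

/-- Optimality of the decoupled graphon LQR control: the cost of any admissible
trajectory is at least `L_T ‖x̆₀‖² + Σ_ℓ M^ℓ_T ⟨x₀, f_ℓ⟩²`, with equality under the
feedback `u_t = −β₀ L_{T−t} x̆_t − Σ_ℓ poly_B(λ_ℓ) M^ℓ_{T−t} ⟨x_t, f_ℓ⟩ f_ℓ`;
hence this feedback law is optimal. -/
theorem graphon_lqr_optimality
    {H : Type*} [NormedAddCommGroup H] [InnerProductSpace ℝ H] [CompleteSpace H]
    {d : ℕ} (f : Fin d → H) (hf : Orthonormal ℝ f) (lam : Fin d → ℝ)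
    (A : H →L[ℝ] H)
    (hA : ∀ v : H, A v = ∑ ℓ : Fin d, (lam ℓ * ⟪v, f ℓ⟫) • f ℓ)
    (α₀ T : ℝ) (hT : 0 < T)
    (polyB polyQ polyP₀ : Polynomial ℝ) (β₀ q₀ z₀ : ℝ)
    (hβ₀ : β₀ = polyB.coeff 0) (hq₀ : q₀ = polyQ.coeff 0) (hz₀ : z₀ = polyP₀.coeff 0)
    (hq₀pos : 0 ≤ q₀) (hz₀pos : 0 ≤ z₀)
    (hQpos : ∀ ℓ : Fin d, 0 ≤ Polynomial.eval (lam ℓ) polyQ)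
    (hPpos : ∀ ℓ : Fin d, 0 ≤ Polynomial.eval (lam ℓ) polyP₀)
    (L : ℝ → ℝ)
    (hL : ∀ t ∈ Set.Icc (0:ℝ) T,
      HasDerivAt L (2 * α₀ * L t - β₀ ^ 2 * (L t) ^ 2 + q₀) t)
    (hL0 : L 0 = z₀)
    (M : Fin d → ℝ → ℝ)
    (hM : ∀ ℓ : Fin d, ∀ t ∈ Set.Icc (0:ℝ) T,
      HasDerivAt (M ℓ)
        (2 * (α₀ + lam ℓ) * M ℓ t
          - (Polynomial.eval (lam ℓ) polyB) ^ 2 * (M ℓ t) ^ 2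
          + Polynomial.eval (lam ℓ) polyQ) t)
    (hM0 : ∀ ℓ : Fin d, M ℓ 0 = Polynomial.eval (lam ℓ) polyP₀)
    (x₀ : H) :
    (∀ x u : ℝ → H,
      (∀ t ∈ Set.Icc (0:ℝ) T,
        HasDerivAt x (α₀ • x t + A (x t) + (Polynomial.aeval A polyB) (u t)) t) →
      x 0 = x₀ → ContinuousOn u (Set.Icc 0 T) →
      L T * ‖x₀ - ∑ ℓ : Fin d, ⟪x₀, f ℓ⟫ • f ℓ‖ ^ 2 + ∑ ℓ : Fin d, M ℓ T * ⟪x₀, f ℓ⟫ ^ 2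
        ≤ (∫ t in (0:ℝ)..T,
            (⟪x t, (Polynomial.aeval A polyQ) (x t)⟫ + ⟪u t, u t⟫))
          + ⟪x T, (Polynomial.aeval A polyP₀) (x T)⟫) ∧
    (∀ x u : ℝ → H,
      (∀ t ∈ Set.Icc (0:ℝ) T,
        HasDerivAt x (α₀ • x t + A (x t) + (Polynomial.aeval A polyB) (u t)) t) →
      x 0 = x₀ → ContinuousOn u (Set.Icc 0 T) →
      (∀ t ∈ Set.Icc (0:ℝ) T,
        u t = -(β₀ * L (T - t)) • (x t - ∑ ℓ : Fin d, ⟪x t, f ℓ⟫ • f ℓ)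
          - ∑ ℓ : Fin d,
              (Polynomial.eval (lam ℓ) polyB * M ℓ (T - t) * ⟪x t, f ℓ⟫) • f ℓ) →
      (∫ t in (0:ℝ)..T,
          (⟪x t, (Polynomial.aeval A polyQ) (x t)⟫ + ⟪u t, u t⟫))
        + ⟪x T, (Polynomial.aeval A polyP₀) (x T)⟫
      = L T * ‖x₀ - ∑ ℓ : Fin d, ⟪x₀, f ℓ⟫ • f ℓ‖ ^ 2
        + ∑ ℓ : Fin d, M ℓ T * ⟪x₀, f ℓ⟫ ^ 2) := by
  constructor
  · intro x u hx hx0 hu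
    rw [graphon_lqr_key hf hA α₀ T hT polyB polyQ polyP₀ β₀ q₀ z₀ hβ₀ hq₀ hz₀
      L hL hL0 M hM hM0 x₀ x u hx hx0 hu]
    have hR0 : 0 ≤ ∫ t in (0:ℝ)..T,
        (⟪(u t - ∑ ℓ : Fin d, ⟪u t, f ℓ⟫ • f ℓ)
            + (β₀ * L (T - t)) • (x t - ∑ ℓ : Fin d, ⟪x t, f ℓ⟫ • f ℓ),
          (u t - ∑ ℓ : Fin d, ⟪u t, f ℓ⟫ • f ℓ)
            + (β₀ * L (T - t)) • (x t - ∑ ℓ : Fin d, ⟪x t, f ℓ⟫ • f ℓ)⟫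
         + ∑ ℓ : Fin d,
            (⟪u t, f ℓ⟫ + Polynomial.eval (lam ℓ) polyB * M ℓ (T - t) * ⟪x t, f ℓ⟫) ^ 2) := by
      refine intervalIntegral.integral_nonneg hT.le fun t _ => ?_
      exact add_nonneg real_inner_self_nonneg
        (Finset.sum_nonneg fun ℓ _ => sq_nonneg _)
    linarith
  · intro x u hx hx0 hu hfb
    rw [graphon_lqr_key hf hA α₀ T hT polyB polyQ polyP₀ β₀ q₀ z₀ hβ₀ hq₀ hz₀
      L hL hL0 M hM hM0 x₀ x u hx hx0 hu]
    have hR0 : (∫ t in (0:ℝ)..T,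
        (⟪(u t - ∑ ℓ : Fin d, ⟪u t, f ℓ⟫ • f ℓ)
            + (β₀ * L (T - t)) • (x t - ∑ ℓ : Fin d, ⟪x t, f ℓ⟫ • f ℓ),
          (u t - ∑ ℓ : Fin d, ⟪u t, f ℓ⟫ • f ℓ)
            + (β₀ * L (T - t)) • (x t - ∑ ℓ : Fin d, ⟪x t, f ℓ⟫ • f ℓ)⟫
         + ∑ ℓ : Fin d,
            (⟪u t, f ℓ⟫ + Polynomial.eval (lam ℓ) polyB * M ℓ (T - t) * ⟪x t, f ℓ⟫) ^ 2))
        = 0 := by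
      have heq : Set.EqOn (fun t =>
          (⟪(u t - ∑ ℓ : Fin d, ⟪u t, f ℓ⟫ • f ℓ)
              + (β₀ * L (T - t)) • (x t - ∑ ℓ : Fin d, ⟪x t, f ℓ⟫ • f ℓ),
            (u t - ∑ ℓ : Fin d, ⟪u t, f ℓ⟫ • f ℓ)
              + (β₀ * L (T - t)) • (x t - ∑ ℓ : Fin d, ⟪x t, f ℓ⟫ • f ℓ)⟫
           + ∑ ℓ : Fin d,
              (⟪u t, f ℓ⟫ + Polynomial.eval (lam ℓ) polyB * M ℓ (T - t) * ⟪x t, f ℓ⟫) ^ 2))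
          (fun _ => (0:ℝ)) (Set.uIcc 0 T) := by
        intro t ht
        rw [Set.uIcc_of_le hT.le] at ht
        simp only []
        have hw : ∀ ℓ : Fin d, ⟪u t, f ℓ⟫
            = -(Polynomial.eval (lam ℓ) polyB * M ℓ (T - t) * ⟪x t, f ℓ⟫) := by
          intro ℓ
          rw [hfb t ht, inner_sub_left, real_inner_smul_left, aux_vb_inner hf (x t) ℓ,
            mul_zero, aux_sum_inner hf
              (fun m => Polynomial.eval (lam m) polyB * M m (T - t) * ⟪x t, f m⟫) ℓ,
            zero_sub]
        have hub : u t - ∑ ℓ : Fin d, ⟪u t, f ℓ⟫ • f ℓ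
            = -((β₀ * L (T - t)) • (x t - ∑ ℓ : Fin d, ⟪x t, f ℓ⟫ • f ℓ)) := by
          rw [show (∑ ℓ : Fin d, ⟪u t, f ℓ⟫ • f ℓ)
              = -(∑ ℓ : Fin d,
                  (Polynomial.eval (lam ℓ) polyB * M ℓ (T - t) * ⟪x t, f ℓ⟫) • f ℓ) by
            rw [← Finset.sum_neg_distrib]
            exact Finset.sum_congr rfl fun ℓ _ => by rw [hw ℓ, neg_smul]]
          rw [hfb t ht, neg_smul]
          abel
        rw [hub, neg_add_cancel, inner_zero_left]
        rw [show (∑ ℓ : Fin d,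
            (⟪u t, f ℓ⟫ + Polynomial.eval (lam ℓ) polyB * M ℓ (T - t) * ⟪x t, f ℓ⟫) ^ 2)
            = 0 from Finset.sum_eq_zero fun ℓ _ => by rw [hw ℓ, neg_add_cancel]; norm_num]
        norm_num
      rw [intervalIntegral.integral_congr heq]
      simp
    rw [hR0, add_zero]
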